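/- Let T be a bounded totally paranormal operator and let μ₁ ≠ μ₂ be nonzero eigenvalues of T with |μ₁| < |μ₂|. Then for every x ∈ ker(T − μ₁I) and y ∈ ker(T − μ₂I), ‖y‖ ≤ ‖x + y‖ (Birkhoff–James orthogonality of the eigenspaces). -/

import Mathlib

theorem stmt_8 {H : Type*} [NormedAddCommGroup H] [InnerProductSpace ℂ H]
    [CompleteSpace H] (T : H →L[ℂ] H)
    (hT : ∀ (lam : ℂ) (x : H),
      ‖(T - lam • 1) x‖ ^ 2 ≤ ‖((T - lam • 1) ∘L (T - lam • 1)) x‖ * ‖x‖)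
    (μ₁ μ₂ : ℂ) (h1 : μ₁ ≠ 0) (h2 : μ₂ ≠ 0) (hne : μ₁ ≠ μ₂)
    (habs : ‖μ₁‖ < ‖μ₂‖)
    (x y : H) (hx : T x = μ₁ • x) (hy : T y = μ₂ • y) :
    ‖y‖ ≤ ‖x + y‖ := by
  rcases eq_or_ne y 0 with rfl | hy0
  · simp
  have hA : (T - μ₁ • 1) (x + y) = (μ₂ - μ₁) • y := by
    simp [ContinuousLinearMap.sub_apply, ContinuousLinearMap.smul_apply,
      ContinuousLinearMap.one_apply, map_add, hx, hy, sub_smul, smul_add]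
  have hA2 : ((T - μ₁ • 1) ∘L (T - μ₁ • 1)) (x + y) = ((μ₂ - μ₁) * (μ₂ - μ₁)) • y := by
    rw [ContinuousLinearMap.comp_apply, hA, map_smul]
    simp [ContinuousLinearMap.sub_apply, ContinuousLinearMap.smul_apply,
      ContinuousLinearMap.one_apply, hy, smul_smul, sub_smul, smul_sub, mul_sub]
  have h := hT μ₁ (x + y)
  rw [hA, hA2, norm_smul, norm_smul, norm_mul] at h
  have hc : (0:ℝ) < ‖μ₂ - μ₁‖ := by
    rw [norm_pos_iff, sub_ne_zero]; exact (Ne.symm hne)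
  have hy0' : (0:ℝ) < ‖y‖ := norm_pos_iff.mpr hy0
  nlinarith [h, mul_pos (mul_pos hc hc) hy0']
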